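/- Let (X, 𝒜, μ) be a σ-finite measure space and D ⊆ ℝ a measurable set of parameter values equipped with Lebesgue measure. For each θ' ∈ D let p(·;θ'): X → ℝ be measurable with p(·;θ') ≥ 0 and ∫ p(x;θ') dμ(x) = 1, and assume (θ', x) ↦ p(x;θ') is jointly measurable. Fix θ ∈ D with p(x;θ) > 0 for μ-a.e. x, and let g: X → ℝ be an unbiased estimator (∫ p(x;θ')|g(x)| dμ(x) < ∞ and ∫ p(x;θ') g(x) dμ(x) = θ' for every θ' ∈ D) with ∫ p(x;θ)(g(x)−θ)² dμ(x) < ∞. Let N ≥ 1 and for i = 1,…,N let f_i: D×D → ℝ be measurable such that (θ₁,θ₂,x) ↦ f_i(θ₁,θ₂)·(p(x;θ₁) − p(x;θ₂))·(1 + |g(x)−θ|) is integrable on D×D×X. Define q_i(x) = ∬ f_i(θ₁,θ₂)(p(x;θ₁) − p(x;θ₂)) dθ₁ dθ₂ and t_i = ∬ f_i(θ₁,θ₂)(θ₁ − θ₂) dθ₁ dθ₂, assume ∫ q_i(x)²/p(x;θ) dμ(x) < ∞ for every i, and assume the N×N matrix B with entries B_{ij} = ∫ q_i(x)q_j(x)/p(x;θ)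 dμ(x) is invertible. Then ∫ p(x;θ)(g(x)−θ)² dμ(x) ≥ tᵀ B⁻¹ t, where t = (t₁,…,t_N)ᵀ. -/

import Mathlib

open MeasureTheory Matrix

/-- Lower Bounds Series B (BBS): the mean-squared error of any unbiased estimator is at
least `tᵀ B⁻¹ t`, where the constraints are obtained by integrating differences of
densities against weight functions `f i` over `D × D`. -/
theorem lower_bound_series_B {X : Type*} [MeasurableSpace X]
    (μ : Measure X) [SigmaFinite μ]
    (D : Set ℝ) (hD : MeasurableSet D)
    (p : ℝ → X → ℝ)
    (hpjm : Measurable (fun z : ℝ × X => p z.1 z.2))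
    (hp0 : ∀ θ' ∈ D, ∀ x, 0 ≤ p θ' x)
    (hp1 : ∀ θ' ∈ D, ∫ x, p θ' x ∂μ = 1)
    (θ : ℝ) (hθ : θ ∈ D) (hθpos : ∀ᵐ x ∂μ, 0 < p θ x)
    (g : X → ℝ) (hgm : Measurable g)
    (hgint : ∀ θ' ∈ D, Integrable (fun x => p θ' x * g x) μ)
    (hunbiased : ∀ θ' ∈ D, ∫ x, p θ' x * g x ∂μ = θ')
    (hmse : Integrable (fun x => p θ x * (g x - θ)^2) μ)
    (N : ℕ) (hN : 1 ≤ N)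
    (f : Fin N → ℝ → ℝ → ℝ)
    (hfm : ∀ i, Measurable (fun z : ℝ × ℝ => f i z.1 z.2))
    (hfint : ∀ i, Integrable
      (fun w : (ℝ × ℝ) × X =>
        f i w.1.1 w.1.2 * (p w.1.1 w.2 - p w.1.2 w.2) * (1 + |g w.2 - θ|))
      (((volume : Measure (ℝ × ℝ)).restrict (D ×ˢ D)).prod μ))
    (q : Fin N → X → ℝ)
    (hq : ∀ i x, q i x = ∫ z in D ×ˢ D, f i z.1 z.2 * (p z.1 x - p z.2 x))
    (t : Fin N → ℝ)
    (ht : ∀ i, t i = ∫ z in D ×ˢ D, f i z.1 z.2 * (z.1 - z.2))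
    (hqint : ∀ i, Integrable (fun x => (q i x)^2 / p θ x) μ)
    (B : Matrix (Fin N) (Fin N) ℝ)
    (hB : ∀ i j, B i j = ∫ x, q i x * q j x / p θ x ∂μ)
    (hBinv : IsUnit B.det) :
    t ⬝ᵥ (B⁻¹ *ᵥ t) ≤ ∫ x, p θ x * (g x - θ)^2 ∂μ := by
  classical
  set ν : Measure (ℝ × ℝ) := (volume : Measure (ℝ × ℝ)).restrict (D ×ˢ D) with hνdef
  have hpθm : Measurable fun x => p θ x :=
    hpjm.comp (measurable_const.prodMk measurable_id)
  -- The integrand with the estimator factor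
  set G : Fin N → (ℝ × ℝ) × X → ℝ := fun i w =>
    f i w.1.1 w.1.2 * (p w.1.1 w.2 - p w.1.2 w.2) * (g w.2 - θ) with hGdef
  have hGm : ∀ i, Measurable (G i) := by
    intro i
    apply Measurable.mul
    · apply Measurable.mul
      · exact (hfm i).comp measurable_fst
      · exact (hpjm.comp ((measurable_fst.fst).prodMk measurable_snd)).sub
          (hpjm.comp ((measurable_fst.snd).prodMk measurable_snd))
    · exact (hgm.comp measurable_snd).sub measurable_const
  have hGint : ∀ i, Integrable (G i) (ν.prod μ) := by
    intro i
    refine Integrable.mono' ((hfint i).abs) (hGm i).aestronglyMeasurable ?_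
    filter_upwards with w
    have h1 : (0:ℝ) ≤ 1 + |g w.2 - θ| := by positivity
    have h2 : ‖G i w‖ = |f i w.1.1 w.1.2 * (p w.1.1 w.2 - p w.1.2 w.2)| * |g w.2 - θ| := by
      simp only [hGdef, Real.norm_eq_abs, abs_mul]
    have h3 : |f i w.1.1 w.1.2 * (p w.1.1 w.2 - p w.1.2 w.2) * (1 + |g w.2 - θ|)|
        = |f i w.1.1 w.1.2 * (p w.1.1 w.2 - p w.1.2 w.2)| * (1 + |g w.2 - θ|) := by
      rw [abs_mul, abs_of_nonneg h1]
    rw [h2, h3]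
    have h4 : |g w.2 - θ| ≤ 1 + |g w.2 - θ| := by linarith
    exact mul_le_mul_of_nonneg_left h4 (abs_nonneg _)
  -- pointwise identity for the integral of the absolute weight
  have habs : ∀ i x, |q i x| * (1 + |g x - θ|)
      ≤ ∫ z, |f i z.1 z.2 * (p z.1 x - p z.2 x) * (1 + |g x - θ|)| ∂ν := by
    intro i x
    have hc : (0:ℝ) ≤ 1 + |g x - θ| := by positivity
    have h1 : (fun z : ℝ × ℝ => |f i z.1 z.2 * (p z.1 x - p z.2 x) * (1 + |g x - θ|)|)
        = fun z : ℝ × ℝ => |f i z.1 z.2 * (p z.1 x - p z.2 x)| * (1 + |g x - θ|) := by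
      funext z
      rw [abs_mul (f i z.1 z.2 * (p z.1 x - p z.2 x)) (1 + |g x - θ|), abs_of_nonneg hc]
    rw [h1, integral_mul_const]
    have h2 : |q i x| ≤ ∫ z, |f i z.1 z.2 * (p z.1 x - p z.2 x)| ∂ν := by
      rw [hq i x]
      have := norm_integral_le_integral_norm (μ := ν)
          (f := fun z : ℝ × ℝ => f i z.1 z.2 * (p z.1 x - p z.2 x))
      simp only [Real.norm_eq_abs] at this
      exact this
    exact mul_le_mul_of_nonneg_right h2 hc
  have habsint : ∀ i, Integrable
      (fun x => ∫ z, |f i z.1 z.2 * (p z.1 x - p z.2 x) * (1 + |g x - θ|)| ∂ν) μ := by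
    intro i
    exact ((hfint i).abs).integral_prod_right
  -- a.e. strong measurability of q i
  have hqaesm : ∀ i, AEStronglyMeasurable (q i) μ := by
    intro i
    have hΦ : Integrable
        (fun x => ∫ z, f i z.1 z.2 * (p z.1 x - p z.2 x) * (1 + |g x - θ|) ∂ν) μ :=
      (hfint i).integral_prod_right
    have heq : q i = fun x =>
        (∫ z, f i z.1 z.2 * (p z.1 x - p z.2 x) * (1 + |g x - θ|) ∂ν) * (1 + |g x - θ|)⁻¹ := by
      funext x
      rw [integral_mul_const, ← hq i x]
      have hne : (1 + |g x - θ|) ≠ 0 := by positivity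
      exact (mul_inv_cancel_right₀ hne (q i x)).symm
    rw [heq]
    exact hΦ.aestronglyMeasurable.mul
      ((measurable_const.add (hgm.sub measurable_const).abs)).inv.aestronglyMeasurable
  -- integrability of q i * (g - θ)
  have hqh_int : ∀ i, Integrable (fun x => q i x * (g x - θ)) μ := by
    intro i
    refine Integrable.mono' (habsint i)
      ((hqaesm i).mul ((hgm.sub measurable_const).aestronglyMeasurable)) ?_
    filter_upwards with x
    have h1 : ‖q i x * (g x - θ)‖ = |q i x| * |g x - θ| := by
      rw [Real.norm_eq_abs, abs_mul]
    rw [h1]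
    refine le_trans ?_ (habs i x)
    have : |g x - θ| ≤ 1 + |g x - θ| := by linarith [abs_nonneg (g x - θ)]
    exact mul_le_mul_of_nonneg_left this (abs_nonneg _)
  -- ∫ q i * (g - θ) = t i
  have hint_qh : ∀ i, ∫ x, q i x * (g x - θ) ∂μ = t i := by
    intro i
    have step1 : (fun x => q i x * (g x - θ)) = fun x => ∫ z, G i (z, x) ∂ν := by
      funext x
      simp only [hGdef]
      rw [integral_mul_const, ← hq i x]
    have step2 : ∫ x, ∫ z, G i (z, x) ∂ν ∂μ = ∫ z, ∫ x, G i (z, x) ∂μ ∂ν :=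
      (integral_integral_swap (f := fun z x => G i (z, x)) (hGint i)).symm
    have step3 : ∫ z, ∫ x, G i (z, x) ∂μ ∂ν = ∫ z, f i z.1 z.2 * (z.1 - z.2) ∂ν := by
      refine integral_congr_ae ?_
      have hmem : ∀ᵐ z ∂ν, z ∈ D ×ˢ D := ae_restrict_mem (hD.prod hD)
      filter_upwards [hmem] with z hz
      obtain ⟨hz1, hz2⟩ := hz
      have i1 : Integrable (fun x => p z.1 x * g x) μ := hgint z.1 hz1
      have i2 : Integrable (fun x => p z.2 x * g x) μ := hgint z.2 hz2
      have j1 : Integrable (fun x => p z.1 x) μ :=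
        integrable_of_integral_eq_one (hp1 z.1 hz1)
      have j2 : Integrable (fun x => p z.2 x) μ :=
        integrable_of_integral_eq_one (hp1 z.2 hz2)
      have e : (fun x => G i (z, x)) = fun x =>
          f i z.1 z.2 * ((p z.1 x * g x - p z.2 x * g x)
            + (θ * p z.2 x - θ * p z.1 x)) := by
        funext x; simp only [hGdef]; ring
      have k1 : Integrable (fun x => p z.1 x * g x - p z.2 x * g x) μ := i1.sub i2
      have k2 : Integrable (fun x => θ * p z.2 x - θ * p z.1 x) μ :=
        (j2.const_mul θ).sub (j1.const_mul θ)
      rw [e, integral_const_mul, integral_add k1 k2,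
        integral_sub i1 i2, integral_sub (j2.const_mul θ) (j1.const_mul θ),
        integral_const_mul, integral_const_mul,
        hunbiased z.1 hz1, hunbiased z.2 hz2, hp1 z.1 hz1, hp1 z.2 hz2]
      ring
    rw [step1, step2, step3, ← ht i]
  -- integrability of q i * q j / p θ
  have hqq_int : ∀ i j, Integrable (fun x => q i x * q j x / p θ x) μ := by
    intro i j
    have haesm : AEStronglyMeasurable (fun x => q i x * q j x / p θ x) μ := by
      refine (((hqaesm i).mul (hqaesm j)).mul
        hpθm.inv.aestronglyMeasurable).congr ?_
      exact Filter.Eventually.of_forall fun x => (div_eq_mul_inv _ _).symm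
    have hbd : Integrable (fun x => (q i x)^2 / p θ x / 2 + (q j x)^2 / p θ x / 2) μ :=
      ((hqint i).div_const 2).add ((hqint j).div_const 2)
    refine Integrable.mono' hbd haesm ?_
    filter_upwards [hθpos] with x hx
    have h2 : 2 * |q i x * q j x| ≤ (q i x)^2 + (q j x)^2 := by
      rw [abs_mul]
      nlinarith [sq_nonneg (|q i x| - |q j x|), sq_abs (q i x), sq_abs (q j x)]
    rw [Real.norm_eq_abs, abs_div, abs_of_pos hx]
    have h3 : |q i x * q j x| / p θ x ≤ (((q i x)^2 + (q j x)^2) / 2) / p θ x :=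
      (div_le_div_iff_of_pos_right hx).mpr (by linarith)
    refine le_trans h3 (le_of_eq ?_)
    ring
  -- the optimal linear combination
  set a : Fin N → ℝ := B⁻¹ *ᵥ t with hadef
  set Q : X → ℝ := fun x => ∑ i, a i * q i x with hQdef
  have hQaesm : AEStronglyMeasurable Q μ := by
    apply Finset.aestronglyMeasurable_fun_sum
    intro i _
    exact (hqaesm i).const_mul (a i)
  have hQh_eq : (fun x => Q x * (g x - θ)) = fun x => ∑ i, a i * (q i x * (g x - θ)) := by
    funext x
    simp only [hQdef, Finset.sum_mul, mul_assoc]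
  have hQh_int : Integrable (fun x => Q x * (g x - θ)) μ := by
    rw [hQh_eq]
    exact integrable_finset_sum _ fun i _ => (hqh_int i).const_mul (a i)
  have hQh_val : ∫ x, Q x * (g x - θ) ∂μ = ∑ i, a i * t i := by
    rw [hQh_eq, integral_finset_sum _ fun i _ => (hqh_int i).const_mul (a i)]
    exact Finset.sum_congr rfl fun i _ => by rw [integral_const_mul, hint_qh i]
  have hQQ_eq : (fun x => Q x ^ 2 / p θ x)
      = fun x => ∑ i, ∑ j, a i * a j * (q i x * q j x / p θ x) := by
    funext x
    simp only [hQdef, sq, Finset.sum_mul_sum, Finset.sum_div]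
    exact Finset.sum_congr rfl fun i _ => Finset.sum_congr rfl fun j _ => by ring
  have hQQ_int : Integrable (fun x => Q x ^ 2 / p θ x) μ := by
    rw [hQQ_eq]
    exact integrable_finset_sum _ fun i _ =>
      integrable_finset_sum _ fun j _ => (hqq_int i j).const_mul _
  have hQQ_val : ∫ x, Q x ^ 2 / p θ x ∂μ = ∑ i, ∑ j, a i * a j * B i j := by
    rw [hQQ_eq, integral_finset_sum _ fun i _ =>
      integrable_finset_sum _ fun j _ => (hqq_int i j).const_mul _]
    refine Finset.sum_congr rfl fun i _ => ?_
    rw [integral_finset_sum _ fun j _ => (hqq_int i j).const_mul _]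
    exact Finset.sum_congr rfl fun j _ => by rw [integral_const_mul, hB i j]
  -- linear algebra
  have hBa : B *ᵥ a = t := by
    rw [hadef, Matrix.mulVec_mulVec, Matrix.mul_nonsing_inv B hBinv, Matrix.one_mulVec]
  have hs1 : ∑ i, a i * t i = t ⬝ᵥ (B⁻¹ *ᵥ t) := by
    rw [← hadef]
    rw [show (∑ i, a i * t i) = a ⬝ᵥ t from rfl, dotProduct_comm]
  have hs2 : ∑ i, ∑ j, a i * a j * B i j = t ⬝ᵥ (B⁻¹ *ᵥ t) := by
    have h1 : a ⬝ᵥ (B *ᵥ a) = ∑ i, ∑ j, a i * (B i j * a j) := by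
      simp [dotProduct, Matrix.mulVec, Finset.mul_sum]
    have h2 : ∑ i, ∑ j, a i * a j * B i j = a ⬝ᵥ (B *ᵥ a) := by
      rw [h1]
      exact Finset.sum_congr rfl fun i _ => Finset.sum_congr rfl fun j _ => by ring
    rw [h2, hBa, ← hadef, dotProduct_comm]
  set s : ℝ := t ⬝ᵥ (B⁻¹ *ᵥ t) with hsdef
  set M : ℝ := ∫ x, p θ x * (g x - θ)^2 ∂μ with hMdef
  -- the key nonnegativity
  have h2Qh : Integrable (fun x => 2 * (Q x * (g x - θ))) μ := hQh_int.const_mul 2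
  have h12 : Integrable (fun x => p θ x * (g x - θ)^2 - 2 * (Q x * (g x - θ))) μ :=
    hmse.sub h2Qh
  have key : ∫ x, (p θ x * (g x - θ)^2 - 2 * (Q x * (g x - θ)) + Q x ^ 2 / p θ x) ∂μ
      = M - 2 * s + s := by
    rw [integral_add h12 hQQ_int, integral_sub hmse h2Qh, integral_const_mul,
      hQh_val, hQQ_val, hs1, hs2, ← hMdef]
  have pos : 0 ≤ ∫ x, (p θ x * (g x - θ)^2 - 2 * (Q x * (g x - θ)) + Q x ^ 2 / p θ x) ∂μ := by
    have heq : (fun x => p θ x * (g x - θ)^2 - 2 * (Q x * (g x - θ)) + Q x ^ 2 / p θ x)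
        =ᵐ[μ] fun x => p θ x * (g x - θ - Q x / p θ x)^2 := by
      filter_upwards [hθpos] with x hx
      have hne : p θ x ≠ 0 := ne_of_gt hx
      field_simp
      ring
    rw [integral_congr_ae heq]
    refine integral_nonneg_of_ae ?_
    filter_upwards with x
    exact mul_nonneg (hp0 θ hθ x) (sq_nonneg _)
  rw [key] at pos
  linarith
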